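/- Let Σ be a signature such that Σ_k ≠ ∅ for some k ≥ 2, and let E and F be GTESs over Σ such that neither the GTRS R⟨E,F⟩ nor the GTRS R⟨F,E⟩ is total. Then ↔*_{E∪F} ⊆ ↔*_E ∪ ↔*_F if and only if E ⊆ Θ⟨F,E⟩ or F ⊆ Θ⟨E,F⟩. -/

import Mathlib

inductive GTerm (S : Type) (ar : S → ℕ) : Type
  | node (σ : S) (args : Fin (ar σ) → GTerm S ar) : GTerm S ar

/-- The congruence on the ground term algebra generated by a set of equations `E`:
the smallest equivalence relation containing `E` and compatible with all operations. -/
inductive EqCong {S : Type} {ar : S → ℕ} (E : Set (GTerm S ar × GTerm S ar)) :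
    GTerm S ar → GTerm S ar → Prop
  | base {s t : GTerm S ar} : (s, t) ∈ E → EqCong E s t
  | refl (t : GTerm S ar) : EqCong E t t
  | symm {s t : GTerm S ar} : EqCong E s t → EqCong E t s
  | trans {s t u : GTerm S ar} : EqCong E s t → EqCong E t u → EqCong E s u
  | lift {σ : S} {f g : Fin (ar σ) → GTerm S ar} :
      (∀ i, EqCong E (f i) (g i)) → EqCong E (GTerm.node σ f) (GTerm.node σ g)

/-- A congruence on the ground term algebra: an equivalence relation compatible
with all operations. -/
def IsTermCongruence {S : Type} {ar : S → ℕ} (r : GTerm S ar → GTerm S ar → Prop) : Prop :=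
  Equivalence r ∧
    ∀ (σ : S) (f g : Fin (ar σ) → GTerm S ar),
      (∀ i, r (f i) (g i)) → r (GTerm.node σ f) (GTerm.node σ g)

/-- `Subterm s t` : `s` is a subterm of `t`. -/
inductive Subterm {S : Type} {ar : S → ℕ} : GTerm S ar → GTerm S ar → Prop
  | refl (t : GTerm S ar) : Subterm t t
  | node {s : GTerm S ar} {σ : S} {f : Fin (ar σ) → GTerm S ar} (i : Fin (ar σ)) :
      Subterm s (f i) → Subterm s (GTerm.node σ f)

/-- `ST E` : the set of all subterms of sides of equations of `E`. -/
def STSet {S : Type} {ar : S → ℕ} (E : Set (GTerm S ar × GTerm S ar)) : Set (GTerm S ar) :=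
  {t | ∃ p ∈ E, Subterm t p.1 ∨ Subterm t p.2}

/-- The `Θ⟨G⟩`-class of `t` inside `W`. -/
def thCls {S : Type} {ar : S → ℕ} (G : Set (GTerm S ar × GTerm S ar))
    (W : Set (GTerm S ar)) (t : GTerm S ar) : Set (GTerm S ar) :=
  {u | u ∈ W ∧ EqCong G t u}

/-- `Θ⟨G⟩` as a set of pairs: the restriction of the generated congruence to `W × W`. -/
def Theta {S : Type} {ar : S → ℕ} (G : Set (GTerm S ar × GTerm S ar))
    (W : Set (GTerm S ar)) : Set (GTerm S ar × GTerm S ar) :=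
  {p | p.1 ∈ W ∧ p.2 ∈ W ∧ EqCong G p.1 p.2}

/-- `C⟨G⟩` : the set of `Θ⟨G⟩`-classes of elements of `W`, viewed as new constants. -/
def CCl {S : Type} {ar : S → ℕ} (G : Set (GTerm S ar × GTerm S ar))
    (W : Set (GTerm S ar)) : Set (Set (GTerm S ar)) :=
  {A | ∃ t ∈ W, A = thCls G W t}

/-- Terms over the signature extended with a type `C` of new constants. -/
inductive XTerm (S : Type) (ar : S → ℕ) (C : Type) : Type
  | const (c : C) : XTerm S ar C
  | node (σ : S) (args : Fin (ar σ) → XTerm S ar C) : XTerm S ar C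

abbrev XRule (S : Type) (ar : S → ℕ) (C : Type) : Type :=
  XTerm S ar C × XTerm S ar C

/-- Embedding of ground terms over `Σ` into the extended terms. -/
def GTerm.toX {S : Type} {ar : S → ℕ} {C : Type} : GTerm S ar → XTerm S ar C
  | .node σ f => .node σ (fun i => (f i).toX)

/-- The GTRS `R⟨G⟩` (relative to the subterm set `W`): its rules are exactly
`σ(t₁/Θ⟨G⟩, …, t_m/Θ⟨G⟩) → σ(t₁,…,t_m)/Θ⟨G⟩` for `σ(t₁,…,t_m) ∈ W`. -/
def RRsys {S : Type} {ar : S → ℕ} (G : Set (GTerm S ar × GTerm S ar))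
    (W : Set (GTerm S ar)) : Set (XRule S ar (Set (GTerm S ar))) :=
  {r | ∃ (σ : S) (ts : Fin (ar σ) → GTerm S ar),
      GTerm.node σ ts ∈ W ∧
      r = (XTerm.node σ (fun i => XTerm.const (thCls G W (ts i))),
           XTerm.const (thCls G W (GTerm.node σ ts)))}

/-- One-step rewriting by a GTRS `R`. -/
inductive Rew {S : Type} {ar : S → ℕ} {C : Type} (R : Set (XRule S ar C)) :
    XTerm S ar C → XTerm S ar C → Prop
  | rule {l r : XTerm S ar C} : (l, r) ∈ R → Rew R l r
  | node {σ : S} {f g : Fin (ar σ) → XTerm S ar C} (i : Fin (ar σ)) :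
      Rew R (f i) (g i) → (∀ j, j ≠ i → f j = g j) →
      Rew R (XTerm.node σ f) (XTerm.node σ g)

/-- `→*_R` : reflexive–transitive closure of one-step rewriting. -/
def RewStar {S : Type} {ar : S → ℕ} {C : Type} (R : Set (XRule S ar C)) :
    XTerm S ar C → XTerm S ar C → Prop :=
  Relation.ReflTransGen (Rew R)

/-- A GTRS is total (w.r.t. a set `Cst` of constants) if every `σ(a₁,…,a_m)` with
`a₁,…,a_m ∈ Cst` is the left-hand side of some rule. -/
def TotalR {S : Type} {ar : S → ℕ} (R : Set (XRule S ar (Set (GTerm S ar))))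
    (Cst : Set (Set (GTerm S ar))) : Prop :=
  ∀ (σ : S) (av : Fin (ar σ) → Set (GTerm S ar)), (∀ i, av i ∈ Cst) →
    ∃ rhs, (XTerm.node σ (fun i => XTerm.const (av i)), rhs) ∈ R

/-- An extended term containing no new constants, i.e. a ground term over `Σ`. -/
def IsGroundX {S : Type} {ar : S → ℕ} {C : Type} (t : XTerm S ar C) : Prop :=
  ∃ s : GTerm S ar, GTerm.toX s = t

/-- `ProperExt b t` : `t = δ[b]` for some one-hole context `δ` over `Σ`
different from the hole itself. -/
inductive ProperExt {S : Type} {ar : S → ℕ} {C : Type} (b : XTerm S ar C) :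
    XTerm S ar C → Prop
  | base {σ : S} {f : Fin (ar σ) → XTerm S ar C} (i : Fin (ar σ)) :
      f i = b → (∀ j, j ≠ i → IsGroundX (f j)) → ProperExt b (XTerm.node σ f)
  | step {σ : S} {f : Fin (ar σ) → XTerm S ar C} (i : Fin (ar σ)) :
      ProperExt b (f i) → (∀ j, j ≠ i → IsGroundX (f j)) → ProperExt b (XTerm.node σ f)

/-- `R` reaches the constant `a` from a proper extension of the constant `b`. -/
def ReachesPE {S : Type} {ar : S → ℕ} (R : Set (XRule S ar (Set (GTerm S ar))))
    (a b : Set (GTerm S ar)) : Prop :=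
  ∃ t, ProperExt (XTerm.const b) t ∧ RewStar R t (XTerm.const a)

/-- The arc relation `A[E;F]` of the auxiliary directed graph: `(a,b)` is an arc iff some
rule `σ(a₁,…,a_m) → a` of `R` has `b = aᵢ` for some `i`. -/
def AuxArc {S : Type} {ar : S → ℕ} (R : Set (XRule S ar (Set (GTerm S ar))))
    (a b : Set (GTerm S ar)) : Prop :=
  ∃ (σ : S) (av : Fin (ar σ) → Set (GTerm S ar)) (i : Fin (ar σ)),
    (XTerm.node σ (fun j => XTerm.const (av j)), XTerm.const a) ∈ R ∧ av i = b

/-- `R1` keeps up with `Rall` writing the constant `a`. -/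
def KeepsUp {S : Type} {ar : S → ℕ}
    (R1 Rall : Set (XRule S ar (Set (GTerm S ar))))
    (C1 : Set (Set (GTerm S ar))) (a : Set (GTerm S ar)) : Prop :=
  ∀ (σ : S) (av : Fin (ar σ) → Set (GTerm S ar)),
    (XTerm.node σ (fun i => XTerm.const (av i)), XTerm.const a) ∈ Rall →
    ∀ bv : Fin (ar σ) → Set (GTerm S ar),
      (∀ i, bv i ∈ C1) → (∀ i, bv i ⊆ av i) →
      ∃ rhs, (XTerm.node σ (fun i => XTerm.const (bv i)), rhs) ∈ R1

/-- `R1` (with constant set `C1`) simulates `Rall` (with constant set `Call`) on `a`. -/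
def SimulatesOn {S : Type} {ar : S → ℕ}
    (R1 Rall : Set (XRule S ar (Set (GTerm S ar))))
    (C1 Call : Set (Set (GTerm S ar))) (a : Set (GTerm S ar)) : Prop :=
  a ∈ C1 ∧ ∀ b ∈ Call, ReachesPE Rall a b → KeepsUp R1 Rall C1 b

/-- `R⟨E,F⟩` and `R⟨F,E⟩` together simulate `R⟨E∪F,∅⟩`. -/
def TogetherSim {S : Type} {ar : S → ℕ}
    (E F : Set (GTerm S ar × GTerm S ar)) : Prop :=
  ∀ a ∈ CCl (E ∪ F) (STSet (E ∪ F)),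
    SimulatesOn (RRsys E (STSet (E ∪ F))) (RRsys (E ∪ F) (STSet (E ∪ F)))
      (CCl E (STSet (E ∪ F))) (CCl (E ∪ F) (STSet (E ∪ F))) a ∨
    SimulatesOn (RRsys F (STSet (E ∪ F))) (RRsys (E ∪ F) (STSet (E ∪ F)))
      (CCl F (STSet (E ∪ F))) (CCl (E ∪ F) (STSet (E ∪ F))) a

-- single step rewriting
inductive GStep {S : Type} {ar : S → ℕ} (E : Set (GTerm S ar × GTerm S ar)) :
    GTerm S ar → GTerm S ar → Prop
  | base {s t} : (s, t) ∈ E → GStep E s t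
  | rev {s t} : (t, s) ∈ E → GStep E s t
  | node {σ : S} {f g : Fin (ar σ) → GTerm S ar} (i : Fin (ar σ)) :
      GStep E (f i) (g i) → (∀ j, j ≠ i → f j = g j) → GStep E (GTerm.node σ f) (GTerm.node σ g)

variable {S : Type} {ar : S → ℕ} {E : Set (GTerm S ar × GTerm S ar)}

theorem GStep.toEq (h : GStep E s t) : EqCong E s t := by
  induction h with
  | base h => exact .base h
  | rev h => exact .symm (.base h)
  | node i h1 h2 ih =>
      exact .lift (fun j => by
        by_cases hj : j = i
        · subst hj; exact ih
        · rw [h2 j hj]; exact .refl _)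

theorem GStep.symm (h : GStep E s t) : GStep E t s := by
  induction h with
  | base h => exact .rev h
  | rev h => exact .base h
  | node i h1 h2 ih => exact .node i ih (fun j hj => (h2 j hj).symm)

theorem chain_update {σ : S} {a b : GTerm S ar} (h : Relation.ReflTransGen (GStep E) a b) :
    ∀ (f : Fin (ar σ) → GTerm S ar) (i : Fin (ar σ)), f i = a →
    Relation.ReflTransGen (GStep E) (GTerm.node σ f) (GTerm.node σ (Function.update f i b)) := by
  induction h with
  | refl =>
      intro f i hfi
      have he : Function.update f i a = f := by rw [← hfi]; exact Function.update_eq_self i f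
      rw [he]
  | tail h1 h2 ih =>
      intro f i hfi
      refine (ih f i hfi).tail ?_
      refine GStep.node i ?_ ?_
      · rw [Function.update_self, Function.update_self]; exact h2
      · intro j hj; rw [Function.update_of_ne hj, Function.update_of_ne hj]

theorem chain_lift {σ : S} {f g : Fin (ar σ) → GTerm S ar}
    (h : ∀ i, Relation.ReflTransGen (GStep E) (f i) (g i)) :
    Relation.ReflTransGen (GStep E) (GTerm.node σ f) (GTerm.node σ g) := by
  have key : ∀ s : Finset (Fin (ar σ)), ∀ g : Fin (ar σ) → GTerm S ar,
      (∀ i, Relation.ReflTransGen (GStep E) (f i) (g i)) →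
      (∀ i, i ∉ s → f i = g i) →
      Relation.ReflTransGen (GStep E) (GTerm.node σ f) (GTerm.node σ g) := by
    intro s
    induction s using Finset.induction with
    | empty =>
        intro g _ hout
        have : f = g := funext fun i => hout i (by simp)
        rw [this]
    | @insert a s ha ih =>
        intro g hall hout
        have h1 : Relation.ReflTransGen (GStep E) (GTerm.node σ f)
            (GTerm.node σ (Function.update g a (f a))) := by
          refine ih _ (fun i => ?_) (fun i hi => ?_)
          · by_cases hia : i = a
            · subst hia; rw [Function.update_self]
            · rw [Function.update_of_ne hia]; exact hall i
          · by_cases hia : i = a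
            · subst hia; rw [Function.update_self]
            · rw [Function.update_of_ne hia]
              exact hout i (by simp [hia, hi])
        refine h1.trans ?_
        have := chain_update (σ := σ) (hall a) (Function.update g a (f a)) a
          (Function.update_self a (f a) g)
        rw [Function.update_idem, Function.update_eq_self] at this
        exact this

  exact key Finset.univ g h (fun i hi => absurd (Finset.mem_univ i) hi)

theorem EqCong.toChain (h : EqCong E s t) : Relation.ReflTransGen (GStep E) s t := by
  induction h with
  | base h => exact Relation.ReflTransGen.single (.base h)
  | refl t => exact .refl
  | symm h ih =>
      clear h
      induction ih with
      | refl => exact .refl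
      | tail h1 h2 ih => exact Relation.ReflTransGen.head h2.symm ih
  | trans h1 h2 ih1 ih2 => exact ih1.trans ih2
  | lift h ih => exact chain_lift ih

theorem node_inj {σ : S} {f g : Fin (ar σ) → GTerm S ar}
    (h : GTerm.node σ f = GTerm.node σ g) : f = g := by
  cases h; rfl

/-- decomposition of a chain starting from a node -/
theorem chain_decomp {σ : S} {f : Fin (ar σ) → GTerm S ar} {t : GTerm S ar}
    (h : Relation.ReflTransGen (GStep E) (GTerm.node σ f) t) :
    (∃ g, t = GTerm.node σ g ∧ ∀ i, EqCong E (f i) (g i)) ∨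
    (∃ g, (∀ i, EqCong E (f i) (g i)) ∧
      ((∃ p, (GTerm.node σ g, p) ∈ E) ∨ (∃ p, (p, GTerm.node σ g) ∈ E))) := by
  induction h with
  | refl => exact Or.inl ⟨f, rfl, fun i => .refl _⟩
  | tail h1 h2 ih =>
      rcases ih with ⟨g, rfl, hc⟩ | hr
      · cases h2 with
        | base hm => exact Or.inr ⟨g, hc, Or.inl ⟨_, hm⟩⟩
        | rev hm => exact Or.inr ⟨g, hc, Or.inr ⟨_, hm⟩⟩
        | node i hs he =>
            refine Or.inl ⟨_, rfl, fun j => ?_⟩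
            by_cases hj : j = i
            · subst hj; exact (hc j).trans hs.toEq
            · rw [← he j hj]; exact hc j
      · exact Or.inr hr

theorem subterm_trans {S : Type} {ar : S → ℕ} {a b c : GTerm S ar}
    (h1 : Subterm a b) (h2 : Subterm b c) : Subterm a c := by
  induction h2 with
  | refl => exact h1
  | node i h ih => exact Subterm.node i ih

/-- NoW property: no term containing g0 is G-equivalent to a member of W. -/
def NoW {S : Type} {ar : S → ℕ} (G : Set (GTerm S ar × GTerm S ar))
    (W : Set (GTerm S ar)) (g0 : GTerm S ar) : Prop :=
  ∀ s, Subterm g0 s → ∀ w ∈ W, ¬ EqCong G s w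

theorem thCls_congr {S : Type} {ar : S → ℕ} {G : Set (GTerm S ar × GTerm S ar)}
    {W : Set (GTerm S ar)} {a b : GTerm S ar} (h : EqCong G a b) :
    thCls G W a = thCls G W b := by
  ext u
  constructor
  · rintro ⟨hu, he⟩; exact ⟨hu, (h.symm).trans he⟩
  · rintro ⟨hu, he⟩; exact ⟨hu, h.trans he⟩

theorem nonW {S : Type} {ar : S → ℕ} {G : Set (GTerm S ar × GTerm S ar)}
    {W : Set (GTerm S ar)}
    (hWside : ∀ p ∈ G, p.1 ∈ W ∧ p.2 ∈ W)
    (hWsub : ∀ a b, Subterm a b → b ∈ W → a ∈ W)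
    {σ0 : S} {r : Fin (ar σ0) → GTerm S ar}
    (hnr : ∀ rhs, (XTerm.node σ0 (fun i => XTerm.const (thCls G W (r i))), rhs) ∉ RRsys G W) :
    NoW G W (GTerm.node σ0 r) := by
  intro s hsub
  induction hsub with
  | refl =>
      intro w hw he
      rcases chain_decomp he.toChain with ⟨g, rfl, hc⟩ | ⟨g, hc, hside⟩
      · -- node σ0 g ∈ W, gives a rule contradicting hnr
        refine hnr (XTerm.const (thCls G W (GTerm.node σ0 g))) ⟨σ0, g, hw, ?_⟩
        have : (fun i => (XTerm.const (thCls G W (r i)) : XTerm S ar (Set (GTerm S ar)))) =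
            (fun i => XTerm.const (thCls G W (g i))) :=
          funext fun i => by rw [thCls_congr (hc i)]
        rw [this]
      · have hgw : GTerm.node σ0 g ∈ W := by
          rcases hside with ⟨p, hp⟩ | ⟨p, hp⟩
          · exact (hWside _ hp).1
          · exact (hWside _ hp).2
        refine hnr (XTerm.const (thCls G W (GTerm.node σ0 g))) ⟨σ0, g, hgw, ?_⟩
        have : (fun i => (XTerm.const (thCls G W (r i)) : XTerm S ar (Set (GTerm S ar)))) =
            (fun i => XTerm.const (thCls G W (g i))) :=
          funext fun i => by rw [thCls_congr (hc i)]
        rw [this]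
  | node i hsub ih =>
      intro w hw he
      rcases chain_decomp he.toChain with ⟨g, rfl, hc⟩ | ⟨g, hc, hside⟩
      · exact ih (g i) (hWsub _ _ (Subterm.node i (Subterm.refl _)) hw) (hc i)
      · have hgw : GTerm.node _ g ∈ W := by
          rcases hside with ⟨p, hp⟩ | ⟨p, hp⟩
          · exact (hWside _ hp).1
          · exact (hWside _ hp).2
        exact ih (g i) (hWsub _ _ (Subterm.node i (Subterm.refl _)) hgw) (hc i)

theorem projE {S : Type} {ar : S → ℕ} {G : Set (GTerm S ar × GTerm S ar)}
    {W : Set (GTerm S ar)} {g0 : GTerm S ar}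
    (hWside : ∀ p ∈ G, p.1 ∈ W ∧ p.2 ∈ W)
    (hno : NoW G W g0)
    {σ : S} {f : Fin (ar σ) → GTerm S ar} {t : GTerm S ar}
    (hin : ∃ i, Subterm g0 (f i))
    (he : EqCong G (GTerm.node σ f) t) :
    ∃ g, t = GTerm.node σ g ∧ ∀ i, EqCong G (f i) (g i) := by
  rcases chain_decomp he.toChain with h | ⟨g, hc, hside⟩
  · exact h
  · exfalso
    obtain ⟨i, hi⟩ := hin
    have hsub : Subterm g0 (GTerm.node σ f) := Subterm.node i hi
    have hgw : GTerm.node σ g ∈ W := by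
      rcases hside with ⟨p, hp⟩ | ⟨p, hp⟩
      · exact (hWside _ hp).1
      · exact (hWside _ hp).2
    exact hno _ hsub _ hgw (EqCong.lift hc)

theorem EqCong.mono {S : Type} {ar : S → ℕ} {G G' : Set (GTerm S ar × GTerm S ar)}
    (hGG : G ⊆ G') {s t : GTerm S ar} (h : EqCong G s t) : EqCong G' s t := by
  induction h with
  | base h => exact .base (hGG h)
  | refl t => exact .refl t
  | symm h ih => exact ih.symm
  | trans h1 h2 ih1 ih2 => exact ih1.trans ih2
  | lift h ih => exact .lift ih

/-- pairing context: `σ1(x, y, c, c, …)`. -/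
def prt {S : Type} {ar : S → ℕ} (σ1 : S) (cterm : GTerm S ar) (x y : GTerm S ar) : GTerm S ar :=
  GTerm.node σ1 (fun j => if (j : ℕ) = 0 then x else if (j : ℕ) = 1 then y else cterm)

theorem prt_subl {S : Type} {ar : S → ℕ} {σ1 : S} (h2 : 2 ≤ ar σ1)
    (cterm x y : GTerm S ar) : Subterm x (prt σ1 cterm x y) := by
  refine Subterm.node ⟨0, by omega⟩ ?_
  simp only [Fin.val_mk, if_pos rfl]
  exact Subterm.refl x

theorem prt_subr {S : Type} {ar : S → ℕ} {σ1 : S} (h2 : 2 ≤ ar σ1)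
    (cterm x y : GTerm S ar) : Subterm y (prt σ1 cterm x y) := by
  refine Subterm.node ⟨1, by omega⟩ ?_
  simp only [Fin.val_mk]
  norm_num
  exact Subterm.refl y

theorem prt_eqc {S : Type} {ar : S → ℕ} {σ1 : S} {G : Set (GTerm S ar × GTerm S ar)}
    {cterm x y x' y' : GTerm S ar} (hx : EqCong G x x') (hy : EqCong G y y') :
    EqCong G (prt σ1 cterm x y) (prt σ1 cterm x' y') := by
  refine EqCong.lift fun j => ?_
  split_ifs
  · exact hx
  · exact hy
  · exact EqCong.refl _

theorem prt_proj {S : Type} {ar : S → ℕ} {σ1 : S} (h2 : 2 ≤ ar σ1)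
    {G : Set (GTerm S ar × GTerm S ar)} {W : Set (GTerm S ar)} {g0 : GTerm S ar}
    (hWside : ∀ p ∈ G, p.1 ∈ W ∧ p.2 ∈ W) (hno : NoW G W g0)
    {cterm x y x' y' : GTerm S ar} (hsub : Subterm g0 x)
    (he : EqCong G (prt σ1 cterm x y) (prt σ1 cterm x' y')) :
    EqCong G x x' ∧ EqCong G y y' := by
  unfold prt at he
  obtain ⟨g, hg, hc⟩ := projE hWside hno
    ⟨⟨0, by omega⟩, by simp only [Fin.val_mk, if_pos rfl]; exact hsub⟩ he
  have hfg := node_inj hg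
  constructor
  · have h0 := hc ⟨0, by omega⟩
    rw [← hfg] at h0
    simpa using h0
  · have h1 := hc ⟨1, by omega⟩
    rw [← hfg] at h1
    simp only [Fin.val_mk] at h1
    norm_num at h1
    exact h1

theorem stmt_12 {S : Type} [Fintype S] {ar : S → ℕ} (hconst : ∃ c : S, ar c = 0)
    (hbig : ∃ σ : S, 2 ≤ ar σ)
    (E F : Set (GTerm S ar × GTerm S ar)) (hEfin : E.Finite) (hFfin : F.Finite)
    (hntE : ¬ TotalR (RRsys E (STSet (E ∪ F))) (CCl E (STSet (E ∪ F))))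
    (hntF : ¬ TotalR (RRsys F (STSet (E ∪ F))) (CCl F (STSet (E ∪ F)))) :
    (∀ s t : GTerm S ar, EqCong (E ∪ F) s t → (EqCong E s t ∨ EqCong F s t)) ↔
    (E ⊆ Theta F (STSet (E ∪ F)) ∨ F ⊆ Theta E (STSet (E ∪ F))) := by
  classical
  set W := STSet (E ∪ F) with hW
  -- basic facts about W
  have hWsubcl : ∀ a b : GTerm S ar, Subterm a b → b ∈ W → a ∈ W := by
    rintro a b hab ⟨p, hp, hps⟩
    exact ⟨p, hp, hps.imp (subterm_trans hab) (subterm_trans hab)⟩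
  have hWsideE : ∀ p ∈ E, p.1 ∈ W ∧ p.2 ∈ W := fun p hp =>
    ⟨⟨p, Or.inl hp, Or.inl (Subterm.refl _)⟩, ⟨p, Or.inl hp, Or.inr (Subterm.refl _)⟩⟩
  have hWsideF : ∀ p ∈ F, p.1 ∈ W ∧ p.2 ∈ W := fun p hp =>
    ⟨⟨p, Or.inr hp, Or.inl (Subterm.refl _)⟩, ⟨p, Or.inr hp, Or.inr (Subterm.refl _)⟩⟩
  constructor
  · -- hard direction
    intro H
    by_contra hcon
    push_neg at hcon
    obtain ⟨hc1, hc2⟩ := hcon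
    obtain ⟨⟨p, q⟩, hpqE, hpqn⟩ := Set.not_subset.mp hc1
    obtain ⟨⟨u, v⟩, huvF, huvn⟩ := Set.not_subset.mp hc2
    have hnFpq : ¬ EqCong F p q := fun h =>
      hpqn ⟨(hWsideE _ hpqE).1, (hWsideE _ hpqE).2, h⟩
    have hnEuv : ¬ EqCong E u v := fun h =>
      huvn ⟨(hWsideF _ huvF).1, (hWsideF _ huvF).2, h⟩
    -- extract nontotality witnesses
    unfold TotalR at hntE hntF
    push_neg at hntE hntF
    obtain ⟨σE, avE, havE, hnoE⟩ := hntE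
    obtain ⟨σF, avF, havF, hnoF⟩ := hntF
    choose rE hrEW hrEeq using havE
    choose rF hrFW hrFeq using havF
    have hnrE : ∀ rhs, (XTerm.node σE (fun i => XTerm.const (thCls E W (rE i))), rhs)
        ∉ RRsys E W := by
      intro rhs hmem
      refine hnoE rhs ?_
      have : (fun i => (XTerm.const (avE i) : XTerm S ar (Set (GTerm S ar)))) =
          (fun i => XTerm.const (thCls E W (rE i))) := funext fun i => by rw [hrEeq i]
      rw [this]
      exact hmem
    have hnrF : ∀ rhs, (XTerm.node σF (fun i => XTerm.const (thCls F W (rF i))), rhs)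
        ∉ RRsys F W := by
      intro rhs hmem
      refine hnoF rhs ?_
      have : (fun i => (XTerm.const (avF i) : XTerm S ar (Set (GTerm S ar)))) =
          (fun i => XTerm.const (thCls F W (rF i))) := funext fun i => by rw [hrFeq i]
      rw [this]
      exact hmem
    have noE : NoW E W (GTerm.node σE rE) := nonW hWsideE hWsubcl hnrE
    have noF : NoW F W (GTerm.node σF rF) := nonW hWsideF hWsubcl hnrF
    set gE := GTerm.node σE rE with hgE
    set gF := GTerm.node σF rF with hgF
    obtain ⟨c0, hc0⟩ := hconst
    obtain ⟨σ1, h2⟩ := hbig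
    set cterm : GTerm S ar := GTerm.node c0 (fun i => absurd i.isLt (by omega)) with hcterm
    set h0 := prt σ1 cterm gE gF with hh0
    have hEh0 : Subterm gE h0 := prt_subl h2 _ _ _
    have hFh0 : Subterm gF h0 := prt_subr h2 _ _ _
    set M1 := prt σ1 cterm h0 p with hM1
    set M2 := prt σ1 cterm h0 q with hM2
    set N1 := prt σ1 cterm h0 u with hN1
    set N2 := prt σ1 cterm h0 v with hN2
    set K1 := prt σ1 cterm M1 N1 with hK1
    set K2 := prt σ1 cterm M2 N2 with hK2
    have hK : EqCong (E ∪ F) K1 K2 :=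
      prt_eqc (prt_eqc (EqCong.refl _) (EqCong.base (Or.inl hpqE)))
        (prt_eqc (EqCong.refl _) (EqCong.base (Or.inr huvF)))
    rcases H K1 K2 hK with hcase | hcase
    · -- E-case: project twice to get EqCong E u v
      have hsubM : Subterm gE M1 := subterm_trans hEh0 (prt_subl h2 _ _ _)
      obtain ⟨hMM, hNN⟩ := prt_proj h2 hWsideE noE hsubM hcase
      obtain ⟨_, huv⟩ := prt_proj h2 hWsideE noE hEh0 hNN
      exact hnEuv huv
    · -- F-case
      have hsubM : Subterm gF M1 := subterm_trans hFh0 (prt_subl h2 _ _ _)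
      obtain ⟨hMM, hNN⟩ := prt_proj h2 hWsideF noF hsubM hcase
      obtain ⟨_, hpq⟩ := prt_proj h2 hWsideF noF hFh0 hMM
      exact hnFpq hpq
  · -- easy direction
    rintro (hE | hF) s t h
    · refine Or.inr ?_
      induction h with
      | base hm =>
          rcases hm with hm | hm
          · exact (hE hm).2.2
          · exact EqCong.base hm
      | refl t => exact EqCong.refl t
      | symm h ih => exact ih.symm
      | trans h1 h2 ih1 ih2 => exact ih1.trans ih2
      | lift h ih => exact EqCong.lift ih
    · refine Or.inl ?_
      induction h with
      | base hm =>
          rcases hm with hm | hm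
          · exact EqCong.base hm
          · exact (hF hm).2.2
      | refl t => exact EqCong.refl t
      | symm h ih => exact ih.symm
      | trans h1 h2 ih1 ih2 => exact ih1.trans ih2
      | lift h ih => exact EqCong.lift ih
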